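/- Let f₁, ..., f_m : ℝⁿ → ℝ be continuous functions, each periodic with some nonzero invariant vector. If f₁ + ⋯ + f_m is Lebesgue integrable on ℝⁿ, then f₁ + ⋯ + f_m is identically zero. -/

import Mathlib

open MeasureTheory

/-- A continuous, integrable, periodic function on ℝⁿ with a nonzero period is identically 0. -/
lemma periodic_integrable_eq_zero {n : ℕ} (g : (Fin n → ℝ) → ℝ) (v : Fin n → ℝ)
    (hc : Continuous g) (hv : v ≠ 0) (hp : ∀ x, g (x + v) = g x)
    (hi : Integrable g (volume : Measure (Fin n → ℝ))) : ∀ x, g x = 0 := by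
  by_contra h
  push_neg at h
  obtain ⟨x₀, hx₀⟩ := h
  set ε : ℝ := |g x₀| / 2 with hε
  have hεpos : 0 < ε := by positivity
  -- continuity: a ball around x₀ where |g| ≥ ε
  obtain ⟨δ, hδpos, hδ⟩ := Metric.continuous_iff.1 hc x₀ ε hεpos
  have hvnorm : 0 < ‖v‖ := norm_pos_iff.2 hv
  set r : ℝ := min δ (‖v‖ / 3) with hr
  have hrpos : 0 < r := lt_min hδpos (by positivity)
  -- on ball x₀ r, |g| ≥ ε
  have hball : ∀ y, dist y x₀ < r → ε ≤ |g y| := by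
    intro y hy
    have h1 : dist (g y) (g x₀) < ε := hδ y (hy.trans_le (min_le_left _ _))
    have h2 : |g x₀| - |g y| ≤ |g x₀ - g y| := abs_sub_abs_le_abs_sub _ _
    rw [Real.dist_eq, abs_sub_comm] at h1
    have : |g x₀| = 2 * ε := by rw [hε]; ring
    linarith
  -- periodicity for natural multiples
  have hpk : ∀ (k : ℕ) (x : Fin n → ℝ), g (x + (k : ℝ) • v) = g x := by
    intro k
    induction k with
    | zero => intro x; simp
    | succ k ih =>
      intro x
      have : x + ((k + 1 : ℕ) : ℝ) • v = (x + (k : ℝ) • v) + v := by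
        push_cast; module
      rw [this, hp, ih]
  -- disjoint balls
  set c : ℕ → (Fin n → ℝ) := fun k => x₀ + (k : ℝ) • v with hcdef
  have hdisj : Pairwise (Function.onFun Disjoint (fun k => Metric.ball (c k) r)) := by
    intro j k hjk
    apply Metric.ball_disjoint_ball
    have : dist (c j) (c k) = |(j : ℝ) - (k : ℝ)| * ‖v‖ := by
      rw [hcdef]
      simp only [dist_eq_norm]
      have : (x₀ + (j : ℝ) • v) - (x₀ + (k : ℝ) • v) = ((j : ℝ) - (k : ℝ)) • v := by module
      rw [this, norm_smul, Real.norm_eq_abs]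
    rw [this]
    have h1 : (1 : ℝ) ≤ |(j : ℝ) - (k : ℝ)| := by
      have hne : (j : ℤ) ≠ (k : ℤ) := by exact_mod_cast hjk
      have : (1 : ℤ) ≤ |(j : ℤ) - (k : ℤ)| := Int.one_le_abs (sub_ne_zero.2 hne)
      calc (1 : ℝ) ≤ |((j : ℤ) - (k : ℤ) : ℤ)| := by exact_mod_cast this
        _ = |(j : ℝ) - (k : ℝ)| := by push_cast; ring_nf
    have h2 : r ≤ ‖v‖ / 3 := min_le_right _ _
    nlinarith
  -- each ball has |g| ≥ ε
  have hballk : ∀ (k : ℕ) (y : Fin n → ℝ), y ∈ Metric.ball (c k) r → ε ≤ |g y| := by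
    intro k y hy
    have hdist : dist (y - (k : ℝ) • v) x₀ < r := by
      rw [Metric.mem_ball, hcdef] at hy
      rw [dist_eq_norm]
      rw [dist_eq_norm] at hy
      have : y - (k : ℝ) • v - x₀ = y - (x₀ + (k : ℝ) • v) := by module
      rw [this]; exact hy
    have h1 := hball _ hdist
    have h2 : g y = g (y - (k : ℝ) • v) := by
      rw [← hpk k (y - (k : ℝ) • v)]
      congr 1
      module
    rwa [h2]
  -- lintegral bound
  have hfin : (∫⁻ x, ‖g x‖₊ ∂(volume : Measure (Fin n → ℝ))) < ⊤ := hi.2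
  set V : ENNReal := volume (Metric.ball (0 : Fin n → ℝ) r) with hV
  have hVpos : V ≠ 0 := (Metric.measure_ball_pos volume 0 hrpos).ne'
  have hVball : ∀ k : ℕ, volume (Metric.ball (c k) r) = V := fun k =>
    Measure.addHaar_ball_center volume (c k) r
  have hmeas : Measurable fun x => (‖g x‖₊ : ENNReal) :=
    (hc.measurable.nnnorm).coe_nnreal_ennreal
  have hle : ∀ k : ℕ, ENNReal.ofReal ε * V ≤ ∫⁻ x in Metric.ball (c k) r, ‖g x‖₊ := by
    intro k
    calc ENNReal.ofReal ε * V = ∫⁻ _ in Metric.ball (c k) r, ENNReal.ofReal ε := by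
          rw [setLIntegral_const, hVball k]
      _ ≤ ∫⁻ x in Metric.ball (c k) r, ‖g x‖₊ := by
          apply setLIntegral_mono hmeas
          intro x hx
          have := hballk k x hx
          rw [← Real.norm_eq_abs] at this
          calc ENNReal.ofReal ε ≤ ENNReal.ofReal ‖g x‖ := ENNReal.ofReal_le_ofReal this
            _ = (‖g x‖₊ : ENNReal) := ofReal_norm _
  have htop : (∫⁻ x, ‖g x‖₊ ∂(volume : Measure (Fin n → ℝ))) = ⊤ := by
    refine top_le_iff.1 ?_
    calc (⊤ : ENNReal) = ∑' _ : ℕ, ENNReal.ofReal ε * V :=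
          (ENNReal.tsum_const_eq_top_of_ne_zero
            (mul_ne_zero (ENNReal.ofReal_pos.2 hεpos).ne' hVpos)).symm
      _ ≤ ∑' k : ℕ, ∫⁻ x in Metric.ball (c k) r, ‖g x‖₊ := ENNReal.tsum_le_tsum hle
      _ = ∫⁻ x in ⋃ k, Metric.ball (c k) r, ‖g x‖₊ :=
          (lintegral_iUnion (fun _ => measurableSet_ball) hdisj _).symm
      _ ≤ ∫⁻ x, ‖g x‖₊ := setLIntegral_le_lintegral _ _
  exact absurd htop hfin.ne

theorem stmt_3 (n m : ℕ) (f : Fin m → (Fin n → ℝ) → ℝ) (v : Fin m → Fin n → ℝ)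
    (hcont : ∀ i, Continuous (f i)) (hv : ∀ i, v i ≠ 0)
    (hper : ∀ i x, f i (x + v i) = f i x)
    (hint : Integrable (fun x => ∑ i, f i x) (volume : Measure (Fin n → ℝ))) :
    ∀ x, ∑ i, f i x = 0 := by
  induction m with
  | zero => intro x; simp
  | succ m ih =>
    set F : (Fin n → ℝ) → ℝ := fun x => ∑ i, f i x with hF
    have hFcont : Continuous F := continuous_finset_sum _ fun i _ => hcont i
    -- the difference family
    set g : Fin m → (Fin n → ℝ) → ℝ :=
      fun i x => f i.castSucc (x + v (Fin.last m)) - f i.castSucc x with hg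
    set w : Fin m → Fin n → ℝ := fun i => v i.castSucc with hw
    have hsum : ∀ x, ∑ i, g i x = F (x + v (Fin.last m)) - F x := by
      intro x
      rw [hF]
      simp only [Fin.sum_univ_castSucc, hg]
      rw [hper (Fin.last m)]
      rw [Finset.sum_sub_distrib]
      ring
    have hgper : ∀ i x, g i (x + w i) = g i x := by
      intro i x
      simp only [hg, hw]
      rw [show x + v i.castSucc + v (Fin.last m)
          = (x + v (Fin.last m)) + v i.castSucc from by module,
        hper i.castSucc, hper i.castSucc]
    have hgint : Integrable (fun x => ∑ i, g i x) (volume : Measure (Fin n → ℝ)) := by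
      have h1 : Integrable (fun x => F (x + v (Fin.last m)) - F x)
          (volume : Measure (Fin n → ℝ)) :=
        (hint.comp_add_right (v (Fin.last m))).sub hint
      exact h1.congr (Filter.Eventually.of_forall fun x => (hsum x).symm)
    have hgzero := ih g w (fun i => ((hcont _).comp (continuous_id.add continuous_const)).sub
      (hcont _)) (fun i => hv _) hgper hgint
    have hper' : ∀ x, F (x + v (Fin.last m)) = F x := by
      intro x
      have := hgzero x
      rw [hsum x] at this
      linarith
    intro x
    exact periodic_integrable_eq_zero F (v (Fin.last m)) hFcont (hv (Fin.last m)) hper' hint x
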